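/- For every j ≥ 0 and real a with a not a nonnegative integer ≤ j, the function φ(x) = x^{-a} · L_j^{(-a)}(x) on (0,∞) satisfies x φ''(x) + (a+1-x) φ'(x) = (a - j) φ(x), where L_j^{(-a)} is the monic generalized Laguerre polynomial with parameter -a. -/

import Mathlib

open Polynomial

/-- The monic generalized Laguerre polynomial `L_n^{(a)}`,
`L_n^{(a)}(x) = ∑_{k=0}^n (-1)^{n-k} (n choose k) (a+k+1)_{n-k} x^k`,
the monic version of the classical Laguerre polynomial, defined by the Rodrigues
formula `L_n^{(a)}(x) = (-1)^n e^x x^{-a} (d/dx)^n [x^{n+a} e^{-x}]`. -/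
noncomputable def laguerreM (n : ℕ) (a : ℝ) : Polynomial ℝ :=
  ∑ k ∈ Finset.range (n + 1),
    C ((-1 : ℝ)^(n - k) * (n.choose k : ℝ) * (ascPochhammer ℝ (n - k)).eval (a + k + 1)) * X ^ k

lemma laguerreM_coeff (n : ℕ) (b : ℝ) (m : ℕ) :
    (laguerreM n b).coeff m =
      if m ≤ n then (-1 : ℝ)^(n - m) * (n.choose m : ℝ) * (ascPochhammer ℝ (n - m)).eval (b + m + 1) else 0 := by
  unfold laguerreM
  rw [Polynomial.finset_sum_coeff]
  simp only [Polynomial.coeff_C_mul, Polynomial.coeff_X_pow, mul_ite, mul_one, mul_zero]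
  rw [Finset.sum_ite_eq (Finset.range (n+1)) m]
  simp [Nat.lt_succ_iff]

/-- Key coefficient recurrence: `(m+1)(b+m+1) c_{m+1} + (n-m) c_m = 0`. -/
lemma laguerreM_coeff_rec (n m : ℕ) (b : ℝ) :
    ((m:ℝ)+1) * (b + m + 1) * (laguerreM n b).coeff (m+1)
      + ((n:ℝ) - m) * (laguerreM n b).coeff m = 0 := by
  rw [laguerreM_coeff, laguerreM_coeff]
  by_cases h1 : m + 1 ≤ n
  · have h0 : m ≤ n := le_of_lt h1
    rw [if_pos h1, if_pos h0]
    obtain ⟨r, hr⟩ : ∃ r, n = m + 1 + r := ⟨n - (m+1), by omega⟩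
    subst hr
    have hs1 : m + 1 + r - (m + 1) = r := by omega
    have hs2 : m + 1 + r - m = r + 1 := by omega
    rw [hs1, hs2]
    have hch : ((m+1+r).choose (m+1) : ℝ) * ((m:ℝ)+1) = ((m+1+r).choose m : ℝ) * ((r:ℝ)+1) := by
      have := Nat.choose_succ_right_eq (m+1+r) m
      have h3 : m + 1 + r - m = r + 1 := by omega
      rw [h3] at this
      exact_mod_cast congrArg (Nat.cast : ℕ → ℝ) this
    have hasc : (ascPochhammer ℝ (r+1)).eval (b + m + 1)
        = (b + m + 1) * (ascPochhammer ℝ r).eval (b + m + 1 + 1) := by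
      rw [ascPochhammer_succ_left]
      simp [eval_comp]
    rw [hasc]
    have : (b : ℝ) + (m+1 : ℕ) + 1 = b + m + 1 + 1 := by push_cast; ring
    rw [this]
    push_cast
    linear_combination ((-1:ℝ)^r * (b + (m:ℝ) + 1) * (ascPochhammer ℝ r).eval (b + m + 1 + 1)) * hch
  · rw [if_neg h1]
    by_cases h0 : m ≤ n
    · have : m = n := by omega
      subst this
      simp
    · rw [if_neg h0]; ring

/-- The monic Laguerre polynomial satisfies `x y'' + (b+1-x) y' + n y = 0`. -/
lemma laguerreM_ode (n : ℕ) (b : ℝ) :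
    X * derivative (derivative (laguerreM n b))
      + C (b + 1) * derivative (laguerreM n b)
      - X * derivative (laguerreM n b)
      + C (n : ℝ) * laguerreM n b = 0 := by
  set P := laguerreM n b
  ext m
  simp only [coeff_add, coeff_sub, coeff_C_mul, coeff_zero]
  rcases m with _ | m
  · simp only [coeff_derivative, mul_coeff_zero, coeff_X_zero, zero_mul]
    have := laguerreM_coeff_rec n 0 b
    push_cast at this ⊢
    linarith [this]
  · rw [coeff_X_mul, coeff_X_mul]
    simp only [coeff_derivative]
    have := laguerreM_coeff_rec n (m+1) b
    push_cast at this ⊢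
    linarith [this]

lemma hasDerivAt_rpow_poly (c : ℝ) (P : Polynomial ℝ) (x : ℝ) (hx : 0 < x) :
    HasDerivAt (fun y : ℝ => y ^ c * P.eval y)
      (c * x ^ (c - 1) * P.eval x + x ^ c * (derivative P).eval x) x := by
  exact ((Real.hasDerivAt_rpow_const (p := c) (Or.inl hx.ne')).mul (P.hasDerivAt x))

/-- for `j ≥ 0` and real `a` which is not a nonnegative integer `≤ j`,
the type-II seed `φ(x) = x^{-a} · L_j^{(-a)}(x)` satisfies
`x φ'' + (a+1-x) φ' = (a-j) φ` on `(0,∞)`. -/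
theorem typeII_seed_ode (j : ℕ) (a : ℝ) (ha : ¬ ∃ k : ℕ, k ≤ j ∧ a = k)
    (φ : ℝ → ℝ) (hφ : ∀ x : ℝ, φ x = x ^ (-a) * (laguerreM j (-a)).eval x) :
    ∀ x : ℝ, 0 < x →
      x * deriv (deriv φ) x + (a + 1 - x) * deriv φ x = (a - j) * φ x := by
  set P := laguerreM j (-a) with hP
  set ψ : ℝ → ℝ := fun y =>
    (-a) * y ^ (-a - 1) * P.eval y + y ^ (-a) * (derivative P).eval y with hψ
  have hderiv : ∀ x : ℝ, 0 < x → deriv φ x = ψ x := by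
    intro x hx
    have h1 : HasDerivAt φ (ψ x) x := by
      have h := hasDerivAt_rpow_poly (-a) P x hx
      have h2 : HasDerivAt (fun y : ℝ => y ^ (-a) * P.eval y) (ψ x) x := by
        convert h using 1
      exact h2.congr_of_eventuallyEq (Filter.Eventually.of_forall fun y => (hφ y))
    exact h1.deriv
  intro x hx
  have hEq : deriv φ =ᶠ[nhds x] ψ := by
    filter_upwards [IsOpen.mem_nhds isOpen_Ioi hx] with y hy using hderiv y hy
  have hdd : deriv (deriv φ) x = deriv ψ x := Filter.EventuallyEq.deriv_eq hEq
  have hψd : HasDerivAt ψ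
      ((-a) * ((-a - 1) * x ^ (-a - 1 - 1) * P.eval x + x ^ (-a - 1) * (derivative P).eval x)
        + ((-a) * x ^ (-a - 1) * (derivative P).eval x
            + x ^ (-a) * (derivative (derivative P)).eval x)) x := by
    have h1 := (hasDerivAt_rpow_poly (-a - 1) P x hx).const_mul (-a)
    have h2 := hasDerivAt_rpow_poly (-a) (derivative P) x hx
    have h3 := h1.add h2
    have h4 : ((-a) * ((-a - 1) * x ^ (-a - 1 - 1) * P.eval x + x ^ (-a - 1) * (derivative P).eval x)
        + ((-a) * x ^ (-a - 1) * (derivative P).eval x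
            + x ^ (-a) * (derivative (derivative P)).eval x))
        = (-a * ((-a - 1) * x ^ (-a - 1 - 1) * P.eval x + x ^ (-a - 1) * (derivative P).eval x)
        + ((-a) * x ^ (-a - 1) * (derivative P).eval x
            + x ^ (-a) * (derivative (derivative P)).eval x)) := by ring
    rw [h4]
    exact h3.congr_of_eventuallyEq (Filter.Eventually.of_forall fun y => by simp only [hψ, Pi.add_apply]; ring)
  rw [hdd, hψd.deriv, hderiv x hx, hφ x]
  have hode := congrArg (fun Q : Polynomial ℝ => Q.eval x) (laguerreM_ode j (-a))
  rw [← hP] at hode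
  simp only [eval_add, eval_sub, eval_mul, eval_C, eval_X, eval_zero] at hode
  have hx1 : x ^ (-a - 1) = x ^ (-a) / x := by
    rw [Real.rpow_sub hx, Real.rpow_one]
  have hx2 : x ^ (-a - 1 - 1) = x ^ (-a) / x / x := by
    rw [Real.rpow_sub hx, Real.rpow_one, hx1]
  have hxne := hx.ne'
  simp only [hψ]
  rw [hx1, hx2]
  field_simp
  linear_combination x * hode
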